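/- arXiv:1510.06381 — 2 statements merged into one kernel-verified Lean document; each statement's English description precedes it below -/
import Mathlib

section
/- Let Λ̄ be a weighted FLC set supported on an FLC set S̄. Then every element Λ of the hull X_{Λ̄} (the vague closure of the 𝔾-orbit {Λ̄ * δ_t : t ∈ 𝔾}) is a measure supported on some point set S belonging to the hull X_{S̄} of S̄. -/
open MeasureTheory Filter Topology Set Pointwise CompactlySupported

noncomputable section

variable {G : Type*} [AddCommGroup G] [TopologicalSpace G] [IsTopologicalAddGroup G]

/-- The translate `x ↦ φ (x + t)` of a compactly supported continuous function. -/
def translateCc (t : G) (φ : C_c(G, ℂ)) : C_c(G, ℂ) :=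
  ⟨⟨fun x => φ (x + t), φ.continuous.comp (continuous_add_right t)⟩,
    φ.hasCompactSupport.comp_homeomorph (Homeomorph.addRight t)⟩

/-- The reflection `x ↦ φ (-x)` of a compactly supported continuous function. -/
def negCc (φ : C_c(G, ℂ)) : C_c(G, ℂ) :=
  ⟨⟨fun x => φ (-x), φ.continuous.comp continuous_neg⟩,
    φ.hasCompactSupport.comp_homeomorph (Homeomorph.neg G)⟩

/-- The translate `Λ * δ_t` of a complex Radon measure, viewed as a functional on `C_c(G, ℂ)`:
`∫ φ d(Λ * δ_t) = ∫ φ(s + t) dΛ(s)`. -/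
def mulDelta (Λ : C_c(G, ℂ) → ℂ) (t : G) : C_c(G, ℂ) → ℂ := fun φ => Λ (translateCc t φ)

/-- A functional on `C_c(G, ℂ)` is linear. -/
def IsLinearFunc (Λ : C_c(G, ℂ) → ℂ) : Prop :=
  ∀ (c : ℂ) (φ ψ : C_c(G, ℂ)), Λ (c • φ + ψ) = c * Λ φ + Λ ψ

/-- `|Λ| (A) ≤ M` in the Riesz sense: any test function supported in `A` and bounded by `1`
is sent to a number of modulus at most `M`. -/
def AbsBoundedOn (Λ : C_c(G, ℂ) → ℂ) (A : Set G) (M : ℝ) : Prop :=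
  ∀ φ : C_c(G, ℂ), tsupport φ ⊆ A → (∀ x, ‖φ x‖ ≤ 1) → ‖Λ φ‖ ≤ M

/-- `(K, M)`-translation-boundedness: `|Λ| (K + t) ≤ M` for all `t`. -/
def IsTransBddWith (Λ : C_c(G, ℂ) → ℂ) (K : Set G) (M : ℝ) : Prop :=
  ∀ t : G, AbsBoundedOn Λ ((fun x => x + t) '' K) M

/-- A translation-bounded (complex Radon) measure on `G`, viewed as a functional. -/
def IsTranslationBounded (Λ : C_c(G, ℂ) → ℂ) : Prop :=
  IsLinearFunc Λ ∧
    ∃ (K : Set G) (M : ℝ), IsCompact K ∧ (interior K).Nonempty ∧ IsTransBddWith Λ K M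

/-- A measured dynamical system of translation-bounded measures: a compact `G`-stable set `X`
of `(K, M)`-translation-bounded measures (with the vague = product topology), carrying a
`G`-invariant Borel probability measure. -/
structure TBSystem (G : Type*) [AddCommGroup G] [TopologicalSpace G]
    [IsTopologicalAddGroup G] where
  K : Set G
  M : ℝ
  hK : IsCompact K
  hKint : (interior K).Nonempty
  X : Set (C_c(G, ℂ) → ℂ)
  hXcompact : IsCompact X
  hlin : ∀ Λ ∈ X, IsLinearFunc Λ
  hbdd : ∀ Λ ∈ X, IsTransBddWith Λ K M
  hstable : ∀ Λ ∈ X, ∀ t : G, mulDelta Λ t ∈ X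
  m : Measure (C_c(G, ℂ) → ℂ)
  hprob : IsProbabilityMeasure m
  hconc : m Xᶜ = 0
  hinv : ∀ t : G, Measure.map (fun Λ => mulDelta Λ t) m = m

/-- Ergodicity of a system of translation-bounded measures. -/
def TBSystem.IsErgodic (S : TBSystem G) : Prop :=
  ∀ A : Set (C_c(G, ℂ) → ℂ), MeasurableSet A →
    (∀ t : G, (fun Λ => mulDelta Λ t) ⁻¹' A = A) → S.m A = 0 ∨ S.m A = 1

/-- Full (topological) support of the measure of the system. -/
def TBSystem.HasFullSupport (S : TBSystem G) : Prop :=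
  ∀ U : Set (C_c(G, ℂ) → ℂ), IsOpen U → (U ∩ S.X).Nonempty → S.m U ≠ 0

/-- A Borel factor map between measured dynamical systems of translation-bounded measures. -/
def IsBorelFactorMap (S S' : TBSystem G) (π : (C_c(G, ℂ) → ℂ) → (C_c(G, ℂ) → ℂ)) : Prop :=
  Measurable π ∧ (∀ᵐ Λ ∂S.m, π Λ ∈ S'.X) ∧
    (∀ t : G, ∀ᵐ Λ ∂S.m, π (mulDelta Λ t) = mulDelta (π Λ) t) ∧
    Measure.map π S.m = S'.m

/-- The natural functions `N_φ (Λ) = ∫ φ(-s) dΛ(s)` on spaces of measures. -/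
def NN (φ : C_c(G, ℂ)) (Λ : C_c(G, ℂ) → ℂ) : ℂ := Λ (negCc φ)

/-- The Pontryagin dual: continuous unimodular characters of `G`. -/
def DualGrp (G : Type*) [AddCommGroup G] [TopologicalSpace G] : Type _ :=
  { ω : C(G, ℂ) // (∀ x, ‖ω x‖ = 1) ∧ ∀ x y, ω (x + y) = ω x * ω y }

instance : TopologicalSpace (DualGrp G) :=
  inferInstanceAs (TopologicalSpace
    { ω : C(G, ℂ) // (∀ x, ‖ω x‖ = 1) ∧ ∀ x y, ω (x + y) = ω x * ω y })

instance : MeasurableSpace (DualGrp G) := borel _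

variable [MeasurableSpace G]

/-- The Fourier transform `φ̂(ω) = ∫ φ(t) conj (ω t) dμ(t)` of a test function, with respect
to a (Haar) measure `μ` on `G`. -/
def ccFourier (μ : Measure G) (φ : C_c(G, ℂ)) (ω : DualGrp G) : ℂ :=
  ∫ t, φ t * (starRingEnd ℂ) (ω.1 t) ∂μ

/-- `γ` is the diffraction measure of the system `S`, with respect to the Haar measure `μ`:
`∫ φ̂ conj ψ̂ dγ = ∫ N_φ conj N_ψ dm` for all test functions `φ ψ`. -/
def IsDiffraction (μ : Measure G) (S : TBSystem G) (γ : Measure (DualGrp G)) : Prop :=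
  ∀ φ ψ : C_c(G, ℂ),
    ∫ ω, ccFourier μ φ ω * (starRingEnd ℂ) (ccFourier μ ψ ω) ∂γ
      = ∫ Λ, NN φ Λ * (starRingEnd ℂ) (NN ψ Λ) ∂S.m

/-- A pure point (purely atomic) measure: concentrated on a countable set. -/
def IsPurePointMeasure {α : Type*} [MeasurableSpace α] (γ : Measure α) : Prop :=
  ∃ D : Set α, D.Countable ∧ γ Dᶜ = 0

/-- A continuous measure: no atoms. -/
def IsContinuousMeasure {α : Type*} [MeasurableSpace α] (γ : Measure α) : Prop :=
  ∀ x : α, γ {x} = 0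


/-- A complex measure (as a functional) is supported on the set `A`. -/
def IsSupportedOn (Λ : C_c(G, ℂ) → ℂ) (A : Set G) : Prop :=
  ∀ φ : C_c(G, ℂ), (∀ x ∈ A, φ x = 0) → Λ φ = 0

/-- `x` is an isolated point of `D`. -/
def IsolatedIn (D : Set G) (x : G) : Prop := ∃ U ∈ 𝓝 x, U ∩ D ⊆ {x}

/-- A point set of finite local complexity: it is uniformly discrete (0 is isolated in `S - S`)
and its difference set `S - S` is closed with all its points isolated. -/
def IsFLC (S : Set G) : Prop :=
  (∃ U ∈ 𝓝 (0 : G), U ∩ (S - S) ⊆ {0}) ∧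
    IsClosed (S - S) ∧ ∀ x ∈ S - S, IsolatedIn (S - S) x

/-- The hull of a translation-bounded measure: the vague closure of its `G`-orbit. -/
def hullF (Λb : C_c(G, ℂ) → ℂ) : Set (C_c(G, ℂ) → ℂ) :=
  closure {Λ | ∃ t : G, Λ = mulDelta Λb t}

/-- The translate `S - t` of a point set. -/
def setTranslate (S : Set G) (t : G) : Set G := (fun x => x + t) ⁻¹' S

/-- The hull (in the local topology) of a point set `Sb`: the point sets `S'` each of whose
basic neighborhoods `O_{U,K}(S')` contains a translate of `Sb`. -/
def pointHull (Sb : Set G) : Set (Set G) :=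
  {S' : Set G | ∀ U ∈ 𝓝 (0 : G), ∀ K : Set G, IsCompact K →
    ∃ t : G, ∃ s ∈ U, S' ∩ K = setTranslate Sb (t + s) ∩ K}

section HullAux

variable {G : Type*} [AddCommGroup G] [TopologicalSpace G] [IsTopologicalAddGroup G]

/-- A compact subset of a set all of whose points are isolated is finite. -/
lemma aux_finite_of_isolated {D T : Set G} (hiso : ∀ x ∈ D, IsolatedIn D x)
    (hT : IsCompact T) (hTD : T ⊆ D) : T.Finite := by
  have hU : ∀ x (hx : x ∈ T), ∃ U ∈ 𝓝 x, U ∩ D ⊆ {x} := fun x hx => hiso x (hTD hx)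
  choose U hUmem hUsub using hU
  obtain ⟨t, hcov⟩ := hT.elim_nhds_subcover' U hUmem
  refine Set.Finite.subset (t.finite_toSet.image (Subtype.val : T → G)) ?_
  intro y hy
  have h1 := hcov hy
  simp only [Set.mem_iUnion] at h1
  obtain ⟨x, hxt, hyU⟩ := h1
  have h2 : y ∈ U x x.2 ∩ D := ⟨hyU, hTD hy⟩
  have h3 := hUsub x x.2 h2
  simp only [Set.mem_singleton_iff] at h3
  subst h3
  exact ⟨x, by simpa using hxt, rfl⟩

/-- Finiteness of the intersection of an FLC-type set with a compact set. -/
lemma aux_finite_inter {Sb : Set G} (hcl : IsClosed (Sb - Sb))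
    (hiso : ∀ x ∈ Sb - Sb, IsolatedIn (Sb - Sb) x) {L : Set G} (hL : IsCompact L) :
    (Sb ∩ L).Finite := by
  rcases Set.eq_empty_or_nonempty (Sb ∩ L) with h | ⟨a, haS, haL⟩
  · simp [h]
  have hLL : IsCompact (L - L) := by
    rw [sub_eq_add_neg]; exact hL.add hL.neg
  have hD1 : ((Sb - Sb) ∩ (L - L)).Finite :=
    aux_finite_of_isolated hiso (hLL.inter_left hcl) Set.inter_subset_left
  have : ((fun x => x - a) '' (Sb ∩ L)).Finite := by
    refine hD1.subset ?_
    rintro _ ⟨x, ⟨hxS, hxL⟩, rfl⟩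
    exact ⟨⟨x, hxS, a, haS, rfl⟩, ⟨x, hxL, a, haL, rfl⟩⟩
  refine Set.Finite.of_finite_image this ?_
  intro x _ y _ h
  simpa using h

/-- The limit point set of `Sb` along an ultrafilter of translations. -/
def limitSet (Sb : Set G) (𝒱 : Ultrafilter G) : Set G :=
  {x | ∀ V ∈ 𝓝 x, ∀ᶠ t in (𝒱 : Filter G), ∃ y ∈ V, y - t ∈ Sb}

/-- Along an ultrafilter, the local patterns of `Sb` on a compact window stabilize. -/
lemma aux_pattern {Sb : Set G} (hcl : IsClosed (Sb - Sb))
    (hiso : ∀ x ∈ Sb - Sb, IsolatedIn (Sb - Sb) x)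
    (𝒱 : Ultrafilter G) {K1 : Set G} (hK1 : IsCompact K1) :
    ∃ (Q : Set G) (p₀ : G) (p : G → G), Q.Finite ∧ Filter.Tendsto p (𝒱 : Filter G) (𝓝 p₀) ∧
      ∀ᶠ t in (𝒱 : Filter G), {y | y ∈ K1 ∧ y - t ∈ Sb} = (fun d => p t + d) '' Q := by
  classical
  by_cases hT0 : {t : G | ∃ y, y ∈ K1 ∧ y - t ∈ Sb} ∈ 𝒱
  · have hpex : ∀ t, ∃ y, t ∈ {t : G | ∃ y, y ∈ K1 ∧ y - t ∈ Sb} → (y ∈ K1 ∧ y - t ∈ Sb) := by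
      intro t
      by_cases h : t ∈ {t : G | ∃ y, y ∈ K1 ∧ y - t ∈ Sb}
      · obtain ⟨y, hy⟩ := h; exact ⟨y, fun _ => hy⟩
      · exact ⟨0, fun h' => absurd h' h⟩
    choose p hp using hpex
    have hmemK : {t | p t ∈ K1} ∈ (𝒱 : Filter G) :=
      Filter.mem_of_superset hT0 (fun t ht => (hp t ht).1)
    obtain ⟨p₀, hp₀K, hle⟩ := hK1.ultrafilter_le_nhds (𝒱.map p)
      (Filter.le_principal_iff.mpr ((Ultrafilter.mem_map).mpr hmemK))
    have htend : Filter.Tendsto p (𝒱 : Filter G) (𝓝 p₀) := by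
      rw [Filter.Tendsto, ← Ultrafilter.coe_map]; exact_mod_cast hle
    have hK1K1 : IsCompact (K1 - K1) := by
      rw [sub_eq_add_neg]; exact hK1.add hK1.neg
    have hD1fin : ((Sb - Sb) ∩ (K1 - K1)).Finite :=
      aux_finite_of_isolated hiso (hK1K1.inter_left hcl) Set.inter_subset_left
    set Qf : G → Set G := fun t => {d | p t + d ∈ K1 ∧ (p t + d) - t ∈ Sb} with hQfdef
    have hQfsub : {t | Qf t ∈ {A | A ⊆ (Sb - Sb) ∩ (K1 - K1)}} ∈ (𝒱 : Filter G) := by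
      refine Filter.mem_of_superset hT0 ?_
      intro t ht d hd
      refine ⟨⟨(p t + d) - t, hd.2, p t - t, (hp t ht).2, by beta_reduce; abel⟩,
        ⟨p t + d, hd.1, p t, (hp t ht).1, by beta_reduce; abel⟩⟩
    obtain ⟨Q, hQsub, hpure⟩ := Ultrafilter.eq_pure_of_finite_mem
      hD1fin.finite_subsets ((Ultrafilter.mem_map).mpr hQfsub)
    have hQev : ∀ᶠ t in (𝒱 : Filter G), Qf t = Q := by
      have h1 : {A : Set G | A = Q} ∈ Ultrafilter.map Qf 𝒱 := by
        rw [hpure]; exact rfl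
      exact (Ultrafilter.mem_map).mp h1
    refine ⟨Q, p₀, p, hD1fin.subset hQsub, htend, ?_⟩
    filter_upwards [hQev] with t hQt
    ext y
    constructor
    · rintro ⟨hyK, hySb⟩
      refine ⟨y - p t, ?_, by beta_reduce; abel⟩
      rw [← hQt]
      have hy : p t + (y - p t) = y := by abel
      exact ⟨by rw [hy]; exact hyK, by rw [hy]; exact hySb⟩
    · rintro ⟨d, hd, rfl⟩
      rw [← hQt] at hd
      exact ⟨hd.1, hd.2⟩
  · refine ⟨∅, 0, fun _ => 0, Set.finite_empty, tendsto_const_nhds, ?_⟩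
    have hc : {t : G | ∃ y, y ∈ K1 ∧ y - t ∈ Sb}ᶜ ∈ (𝒱 : Filter G) :=
      Ultrafilter.compl_mem_iff_notMem.mpr hT0
    filter_upwards [hc] with t ht
    ext y
    simp only [Set.image_empty, Set.mem_empty_iff_false, iff_false, Set.mem_setOf_eq]
    exact fun hy => ht ⟨y, hy⟩

end HullAux
lemma aux_mem_limitSet {Sb : Set G} {𝒱 : Ultrafilter G} {K1 : Set G} {Q : Set G} {p₀ : G}
    {p : G → G} (htend : Filter.Tendsto p (𝒱 : Filter G) (𝓝 p₀))
    (hpat : ∀ᶠ t in (𝒱 : Filter G), {y | y ∈ K1 ∧ y - t ∈ Sb} = (fun d => p t + d) '' Q)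
    {q : G} (hq : q ∈ Q) : p₀ + q ∈ limitSet Sb 𝒱 := by
  intro V hV
  have h0 : Filter.Tendsto (fun t => p t + q) (𝒱 : Filter G) (𝓝 (p₀ + q)) :=
    htend.add_const q
  have h1 : ∀ᶠ t in (𝒱 : Filter G), p t + q ∈ V := h0.eventually_mem hV
  filter_upwards [h1, hpat] with t h1t hpt
  refine ⟨p t + q, h1t, ?_⟩
  have h2 : p t + q ∈ {y | y ∈ K1 ∧ y - t ∈ Sb} := by rw [hpt]; exact ⟨q, hq, rfl⟩
  exact h2.2

lemma aux_limitSet_subset [T2Space G] {Sb : Set G} {𝒱 : Ultrafilter G} {K1 : Set G} {Q : Set G}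
    (hQfin : Q.Finite) {p₀ : G} {p : G → G}
    (htend : Filter.Tendsto p (𝒱 : Filter G) (𝓝 p₀))
    (hpat : ∀ᶠ t in (𝒱 : Filter G), {y | y ∈ K1 ∧ y - t ∈ Sb} = (fun d => p t + d) '' Q) :
    limitSet Sb 𝒱 ∩ interior K1 ⊆ (fun d => p₀ + d) '' Q := by
  rintro x ⟨hxS, hxK⟩
  by_contra hx
  set F := (fun d => p₀ + d) '' Q with hF
  have hFc : IsCompact F := (hQfin.image _).isCompact
  have hdisj : Disjoint ({x} : Set G) F := by
    simp only [Set.disjoint_singleton_left]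
    exact hx
  obtain ⟨A, B, hAo, hBo, hxA, hFB, hABdisj⟩ :=
    SeparatedNhds.of_isCompact_isCompact isCompact_singleton hFc hdisj
  have hxA' : x ∈ A := hxA rfl
  have hBev : ∀ᶠ t in (𝒱 : Filter G), ∀ q ∈ Q, p t + q ∈ B := by
    rw [Filter.eventually_all_finite hQfin]
    intro q hq
    exact ((htend.add_const q).eventually_mem
      (hBo.mem_nhds (hFB ⟨q, hq, rfl⟩)))
  have hV : interior K1 ∩ A ∈ 𝓝 x :=
    Filter.inter_mem (isOpen_interior.mem_nhds hxK) (hAo.mem_nhds hxA')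
  have hxSe := hxS _ hV
  obtain ⟨t, ⟨y, ⟨hyK, hyA⟩, hySb⟩, hBt, hpt⟩ := (hxSe.and (hBev.and hpat)).exists
  have hy : y ∈ {y | y ∈ K1 ∧ y - t ∈ Sb} := ⟨interior_subset hyK, hySb⟩
  rw [hpt] at hy
  obtain ⟨q, hq, rfl⟩ := hy
  exact Set.disjoint_left.mp hABdisj hyA (hBt q hq)
lemma aux_limitSet_mem_pointHull [T2Space G] {Sb : Set G}
    (hcl : IsClosed (Sb - Sb)) (hiso : ∀ x ∈ Sb - Sb, IsolatedIn (Sb - Sb) x)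
    (𝒱 : Ultrafilter G) {C0 : Set G} (hC0c : IsCompact C0) (hC0n : C0 ∈ 𝓝 0) :
    limitSet Sb 𝒱 ∈ pointHull Sb := by
  intro U hU K hK
  obtain ⟨Q, p₀, p, hQfin, htend, hpat⟩ := aux_pattern hcl hiso 𝒱 (hK.add hC0c)
  have hKsub : K ⊆ interior (K + C0) := by
    have hsub : K + interior C0 ⊆ interior (K + C0) :=
      (isOpen_interior.add_left (s := K)).subset_interior_iff.mpr
        (Set.add_subset_add_left interior_subset)
    intro x hx
    refine hsub ⟨x, hx, 0, mem_interior_iff_mem_nhds.mpr hC0n, add_zero x⟩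
  rcases Set.eq_empty_or_nonempty Q with hQe | hQne
  · obtain ⟨t1, hpt1⟩ := hpat.exists
    refine ⟨-t1, 0, mem_of_mem_nhds hU, ?_⟩
    subst hQe
    rw [Set.image_empty] at hpt1
    ext x
    simp only [Set.mem_inter_iff, setTranslate, Set.mem_preimage, add_zero]
    constructor
    · rintro ⟨hxS, hxK⟩
      have : x ∈ ((fun d => p₀ + d) '' (∅ : Set G)) :=
        aux_limitSet_subset (Set.finite_empty) htend hpat ⟨hxS, hKsub hxK⟩
      simp at this
    · rintro ⟨hxSb, hxK⟩
      have : x ∈ {y | y ∈ K + C0 ∧ y - t1 ∈ Sb} := by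
        refine ⟨?_, by rwa [sub_eq_add_neg]⟩
        exact interior_subset (hKsub hxK)
      rw [hpt1] at this
      exact absurd this (by simp)
  · have hnhds : {z | z - p₀ ∈ C0} ∈ 𝓝 p₀ := by
      have hcont : Filter.Tendsto (fun z : G => z - p₀) (𝓝 p₀) (𝓝 (p₀ - p₀)) :=
        (continuous_sub_right p₀).continuousAt
      rw [sub_self] at hcont
      exact hcont hC0n
    obtain ⟨t1, hpt1, hpC0⟩ := (hpat.and (htend.eventually_mem hnhds)).exists
    refine ⟨-t1 - (p₀ - p t1), 0, mem_of_mem_nhds hU, ?_⟩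
    have hSK : limitSet Sb 𝒱 ∩ K = ((fun d => p₀ + d) '' Q) ∩ K := by
      apply Set.Subset.antisymm
      · rintro x ⟨h1, h2⟩
        exact ⟨aux_limitSet_subset hQfin htend hpat ⟨h1, hKsub h2⟩, h2⟩
      · rintro x ⟨h1, h2⟩
        obtain ⟨q, hq, rfl⟩ := h1
        exact ⟨aux_mem_limitSet htend hpat hq, h2⟩
    rw [hSK]
    ext x
    simp only [Set.mem_inter_iff, setTranslate, Set.mem_preimage, add_zero]
    constructor
    · rintro ⟨⟨q, hq, rfl⟩, hxK⟩
      have hmem : p t1 + q ∈ {y | y ∈ K + C0 ∧ y - t1 ∈ Sb} := by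
        rw [hpt1]; exact ⟨q, hq, rfl⟩
      refine ⟨?_, hxK⟩
      have heq : (fun d => p₀ + d) q + (-t1 - (p₀ - p t1)) = p t1 + q - t1 := by
        beta_reduce; abel
      rw [heq]
      exact hmem.2
    · rintro ⟨hxSb, hxK⟩
      have hyK1 : x - (p₀ - p t1) ∈ K + C0 := by
        refine ⟨x, hxK, p t1 - p₀, hpC0, ?_⟩
        beta_reduce; abel
      have hmem : x - (p₀ - p t1) ∈ {y | y ∈ K + C0 ∧ y - t1 ∈ Sb} := by
        refine ⟨hyK1, ?_⟩
        have heq : x - (p₀ - p t1) - t1 = x + (-t1 - (p₀ - p t1)) := by abel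
        rw [heq]; exact hxSb
      rw [hpt1] at hmem
      obtain ⟨q, hq, heq⟩ := hmem
      beta_reduce at heq
      refine ⟨⟨q, hq, ?_⟩, hxK⟩
      beta_reduce
      have h2 : p t1 + q + (p₀ - p t1) = x := by rw [heq]; abel
      rw [← h2]; abel
lemma aux_lin_add {Λ : C_c(G, ℂ) → ℂ} (h : IsLinearFunc Λ) (φ ψ : C_c(G, ℂ)) :
    Λ (φ + ψ) = Λ φ + Λ ψ := by
  have h1 := h 1 φ ψ
  simpa using h1

lemma aux_lin_zero {Λ : C_c(G, ℂ) → ℂ} (h : IsLinearFunc Λ) : Λ 0 = 0 := by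
  have h1 := h 1 0 0
  simp only [one_smul, add_zero, one_mul] at h1
  exact (add_eq_right.mp h1.symm)

lemma aux_lin_smul {Λ : C_c(G, ℂ) → ℂ} (h : IsLinearFunc Λ) (c : ℂ) (φ : C_c(G, ℂ)) :
    Λ (c • φ) = c * Λ φ := by
  have h1 := h c φ 0
  rw [add_zero, aux_lin_zero h, add_zero] at h1
  exact h1

lemma aux_lin_sum {Λ : C_c(G, ℂ) → ℂ} (h : IsLinearFunc Λ) {ι : Type*} (s : Finset ι)
    (f : ι → C_c(G, ℂ)) : Λ (∑ i ∈ s, f i) = ∑ i ∈ s, Λ (f i) := by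
  classical
  induction s using Finset.induction_on with
  | empty => simpa using aux_lin_zero h
  | insert _ _ hx ih => rw [Finset.sum_insert hx, Finset.sum_insert hx, aux_lin_add h, ih]

/-- Multiplication of a compactly supported function by a real continuous function. -/
def mulRealCc (f : C(G, ℝ)) (ψ : C_c(G, ℂ)) : C_c(G, ℂ) :=
  ⟨⟨fun x => (f x : ℂ) * ψ x, (Complex.continuous_ofReal.comp f.continuous).mul ψ.continuous⟩,
    ψ.hasCompactSupport.mul_left⟩

@[simp] lemma mulRealCc_apply (f : C(G, ℝ)) (ψ : C_c(G, ℂ)) (x : G) :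
    mulRealCc f ψ x = (f x : ℂ) * ψ x := rfl

lemma aux_bound [T2Space G] [LocallyCompactSpace G] {Λb : C_c(G, ℂ) → ℂ}
    (hlin : IsLinearFunc Λb) {Kb : Set G} {M : ℝ} (hKb : IsCompact Kb)
    (hKbint : (interior Kb).Nonempty) (htb : IsTransBddWith Λb Kb M) {C2 : Set G}
    (hC2 : IsCompact C2) :
    ∃ Cst : ℝ, 0 ≤ Cst ∧ ∀ (t : G) (ψ : C_c(G, ℂ)) (b : ℝ),
      tsupport ψ ⊆ {x | x + t ∈ C2} → (∀ x, ‖ψ x‖ ≤ b) → ‖Λb ψ‖ ≤ Cst * b := by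
  classical
  obtain ⟨k0, hk0⟩ := hKbint
  have hM : 0 ≤ M := by
    have h := htb 0 0 (by simp [tsupport, CompactlySupportedContinuousMap.coe_zero])
      (by intro x; simp)
    rw [aux_lin_zero hlin] at h
    simpa using h
  obtain ⟨s, hsC2, hscov⟩ := hC2.elim_nhds_subcover (fun c => {y | y - c + k0 ∈ interior Kb})
    (fun c _ => by
      have hco : Continuous fun y : G => y - c + k0 := (continuous_sub_right c).add continuous_const
      have hmem : interior Kb ∈ 𝓝 (c - c + k0) := by
        have h1 : c - c + k0 = k0 := by abel
        rw [h1]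
        exact isOpen_interior.mem_nhds hk0
      exact hco.continuousAt.preimage_mem_nhds hmem)
  refine ⟨s.card * M, by positivity, ?_⟩
  intro t ψ b hsupp hb
  have hb0 : 0 ≤ b := le_trans (norm_nonneg _) (hb 0)
  rcases eq_or_lt_of_le hb0 with hb0' | hb0'
  · have hψ : ψ = 0 := by
      ext x
      have h1 := hb x
      rw [← hb0'] at h1
      simpa using le_antisymm h1 (norm_nonneg _)
    rw [hψ, aux_lin_zero hlin]
    simp [← hb0']
  set e : Fin s.card → G := fun i => (s.equivFin.symm i : G) with he
  set V : Fin s.card → Set G := fun i => {x | x + t - e i + k0 ∈ interior Kb} with hV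
  have hVo : ∀ i, IsOpen (V i) := fun i => by
    have hco : Continuous fun x : G => x + t - e i + k0 := by continuity
    exact isOpen_interior.preimage hco
  have hcov : tsupport ψ ⊆ ⋃ i, V i := by
    intro x hx
    have hxC2 : x + t ∈ C2 := hsupp hx
    have h1 := hscov hxC2
    simp only [Set.mem_iUnion] at h1
    obtain ⟨c, hcs, hcx⟩ := h1
    refine Set.mem_iUnion.mpr ⟨s.equivFin ⟨c, hcs⟩, ?_⟩
    show x + t - e (s.equivFin ⟨c, hcs⟩) + k0 ∈ interior Kb
    have he2 : e (s.equivFin ⟨c, hcs⟩) = c := by simp [he]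
    rw [he2]
    exact hcx
  obtain ⟨f, hfsub, hfone, hficc, hfcs⟩ :=
    exists_continuous_sum_one_of_isOpen_isCompact hVo ψ.hasCompactSupport hcov
  have hψsum : ψ = ∑ i, mulRealCc (f i) ψ := by
    ext x
    have h1 : (∑ i, mulRealCc (f i) ψ) x = ∑ i, (f i x : ℂ) * ψ x := by
      rw [CompactlySupportedContinuousMap.coe_sum, Finset.sum_apply]
      rfl
    rw [h1]
    by_cases hx : x ∈ tsupport ψ
    · have h2 := hfone hx
      simp only [Finset.sum_apply, Pi.one_apply] at h2
      have h3 : (∑ i : Fin s.card, (f i x : ℂ)) = 1 := by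
        have h2' := congrArg (fun r : ℝ => (r : ℂ)) h2
        push_cast at h2'
        simpa using h2'
      calc ψ x = 1 * ψ x := (one_mul _).symm
        _ = (∑ i : Fin s.card, (f i x : ℂ)) * ψ x := by rw [h3]
        _ = ∑ i, (f i x : ℂ) * ψ x := by rw [Finset.sum_mul]
    · have h0 : ψ x = 0 := image_eq_zero_of_notMem_tsupport hx
      simp [h0]
  have hpiece : ∀ i : Fin s.card, ‖Λb (mulRealCc (f i) ψ)‖ ≤ M * b := by
    intro i
    set χ := mulRealCc (f i) ψ with hχ
    have hχb : ∀ x, ‖χ x‖ ≤ b := by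
      intro x
      rw [hχ, mulRealCc_apply, norm_mul]
      have h4 : ‖(f i x : ℂ)‖ ≤ 1 := by
        rw [Complex.norm_real, Real.norm_eq_abs, abs_of_nonneg (hficc i x).1]
        exact (hficc i x).2
      calc ‖(f i x : ℂ)‖ * ‖ψ x‖ ≤ 1 * b :=
            mul_le_mul h4 (hb x) (norm_nonneg _) zero_le_one
        _ = b := one_mul b
    have hχsupp : tsupport χ ⊆ (fun x => x + (e i - k0 - t)) '' Kb := by
      have h1 : tsupport χ ⊆ tsupport (f i) := by
        apply closure_mono
        intro x hx
        simp only [Function.mem_support] at hx ⊢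
        intro h0
        apply hx
        show (f i x : ℂ) * ψ x = 0
        rw [h0]
        simp
      refine h1.trans ((hfsub i).trans ?_)
      intro x hx
      refine ⟨x + t - e i + k0, interior_subset hx, ?_⟩
      beta_reduce
      abel
    have habs := htb (e i - k0 - t) ((b⁻¹ : ℂ) • χ)
      (by
        refine subset_trans (closure_mono ?_) hχsupp
        intro x hx
        simp only [Function.mem_support, CompactlySupportedContinuousMap.coe_smul,
          Pi.smul_apply, smul_eq_mul] at hx ⊢
        intro h0
        apply hx
        rw [h0, mul_zero])
      (by
        intro x
        have h5 : ((b⁻¹ : ℂ) • χ) x = (b⁻¹ : ℂ) * χ x := by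
          rw [CompactlySupportedContinuousMap.coe_smul]
          rfl
        rw [h5, norm_mul]
        have h6 : ‖((b : ℂ))⁻¹‖ = b⁻¹ := by
          rw [norm_inv, Complex.norm_real, Real.norm_eq_abs, abs_of_nonneg hb0]
        rw [h6]
        calc b⁻¹ * ‖χ x‖ ≤ b⁻¹ * b := by
              apply mul_le_mul_of_nonneg_left (hχb x) (inv_nonneg.mpr hb0)
          _ = 1 := inv_mul_cancel₀ (ne_of_gt hb0')
        )
    rw [aux_lin_smul hlin] at habs
    rw [norm_mul] at habs
    have h6 : ‖((b : ℂ))⁻¹‖ = b⁻¹ := by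
      rw [norm_inv, Complex.norm_real, Real.norm_eq_abs, abs_of_nonneg hb0]
    rw [h6] at habs
    have h7 : ‖Λb χ‖ = b * (b⁻¹ * ‖Λb χ‖) := by
      field_simp
    rw [h7]
    calc b * (b⁻¹ * ‖Λb χ‖) ≤ b * M := mul_le_mul_of_nonneg_left habs hb0
      _ = M * b := mul_comm b M
  have hsum2 : Λb ψ = ∑ i, Λb (mulRealCc (f i) ψ) := by
    conv_lhs => rw [hψsum]
    exact aux_lin_sum hlin _ _
  calc ‖Λb ψ‖ = ‖∑ i, Λb (mulRealCc (f i) ψ)‖ := by rw [hsum2]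
    _ ≤ ∑ i, ‖Λb (mulRealCc (f i) ψ)‖ := norm_sum_le _ _
    _ ≤ ∑ _i : Fin s.card, M * b := Finset.sum_le_sum (fun i _ => hpiece i)
    _ = s.card * (M * b) := by rw [Finset.sum_const, Finset.card_univ, Fintype.card_fin,
          nsmul_eq_mul]
    _ = s.card * M * b := by ring
lemma aux_supported [T2Space G] [LocallyCompactSpace G] {Sb : Set G}
    (hcl : IsClosed (Sb - Sb)) (hiso : ∀ x ∈ Sb - Sb, IsolatedIn (Sb - Sb) x)
    {Λb : C_c(G, ℂ) → ℂ} (hlin : IsLinearFunc Λb) (hsupp : IsSupportedOn Λb Sb)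
    {Kb : Set G} {M : ℝ} (hKb : IsCompact Kb) (hKbint : (interior Kb).Nonempty)
    (htb : IsTransBddWith Λb Kb M) (𝒱 : Ultrafilter G)
    {C0 : Set G} (hC0c : IsCompact C0) (hC0n : C0 ∈ 𝓝 0)
    {Λ : C_c(G, ℂ) → ℂ}
    (hconv : ∀ φ : C_c(G, ℂ),
      Filter.Tendsto (fun t => mulDelta Λb t φ) (𝒱 : Filter G) (𝓝 (Λ φ))) :
    IsSupportedOn Λ (limitSet Sb 𝒱) := by
  classical
  intro φ hφ0
  have hCc : IsCompact (tsupport φ) := φ.hasCompactSupport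
  obtain ⟨Q, p₀, p, hQfin, htend, hpat⟩ := aux_pattern hcl hiso 𝒱 hCc
  obtain ⟨Cst, hCst0, hbd⟩ := aux_bound hlin hKb hKbint htb (hCc.add hC0c)
  set N := (hQfin.toFinset.card : ℝ) with hN
  have hN0 : 0 ≤ N := by positivity
  have hφq : ∀ q ∈ Q, φ (p₀ + q) = 0 := fun q hq =>
    hφ0 _ (aux_mem_limitSet htend hpat hq)
  have hmain : ∀ ε : ℝ, 0 < ε → ‖Λ φ‖ ≤ Cst * (N * ε) := by
    intro ε hε
    have hBε : ∀ᶠ z in 𝓝 p₀, ∀ q ∈ Q, ‖φ (z + q)‖ ≤ ε := by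
      rw [Filter.eventually_all_finite hQfin]
      intro q hq
      have hcont : Filter.Tendsto (fun z : G => φ (z + q)) (𝓝 p₀) (𝓝 (φ (p₀ + q))) :=
        (φ.continuous.comp (continuous_add_right q)).continuousAt
      rw [hφq q hq] at hcont
      have hball : ∀ᶠ w : ℂ in 𝓝 0, ‖w‖ ≤ ε := by
        filter_upwards [Metric.closedBall_mem_nhds (0 : ℂ) hε] with w hw
        simpa [Metric.mem_closedBall, dist_zero_right] using hw
      exact hcont.eventually hball
    have hest : ∀ᶠ t in (𝒱 : Filter G), ‖mulDelta Λb t φ‖ ≤ Cst * (N * ε) := by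
      filter_upwards [hpat, htend.eventually hBε] with t hpt hpB
      -- pattern membership
      have hQmem : ∀ q ∈ Q, p t + q ∈ tsupport φ ∧ (p t + q) - t ∈ Sb := by
        intro q hq
        have h1 : p t + q ∈ {y | y ∈ tsupport φ ∧ y - t ∈ Sb} := by
          rw [hpt]; exact ⟨q, hq, rfl⟩
        exact h1
      -- bump functions
      have hbump : ∀ q ∈ Q, ∃ β : C(G, ℝ), β (p t + q - t) = 1 ∧
          HasCompactSupport β ∧ (∀ x, β x ∈ Set.Icc (0 : ℝ) 1) ∧
          (∀ x, β x ≠ 0 → (x - (p t + q - t) ∈ interior C0 ∧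
            (x ∈ Sb → x = p t + q - t))) := by
        intro q hq
        set c := p t + q - t with hc
        have hL : IsCompact ((fun z => z + c) '' C0) := hC0c.image (continuous_add_right c)
        have hFfin : ((Sb ∩ ((fun z => z + c) '' C0)) \ {c}).Finite :=
          (aux_finite_inter hcl hiso hL).diff
        have hFcl : IsClosed ((Sb ∩ ((fun z => z + c) '' C0)) \ {c}) := hFfin.isClosed
        set O := ((fun x => x - c) ⁻¹' interior C0) \ ((Sb ∩ ((fun z => z + c) '' C0)) \ {c})
          with hO
        have hOo : IsOpen O := (isOpen_interior.preimage (continuous_sub_right c)).sdiff hFcl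
        have hcO : c ∈ O := by
          constructor
          · show c - c ∈ interior C0
            rw [sub_self]
            exact mem_interior_iff_mem_nhds.mpr hC0n
          · simp
        obtain ⟨β, hβ1, hβ0, hβcs, hβicc⟩ := exists_continuous_one_zero_of_isCompact
          isCompact_singleton hOo.isClosed_compl
          (by simpa [Set.disjoint_singleton_left] using hcO)
        refine ⟨β, hβ1 rfl, hβcs, hβicc, ?_⟩
        intro x hx
        have hxO : x ∈ O := by
          by_contra hxO
          exact hx (hβ0 hxO)
        refine ⟨hxO.1, ?_⟩
        intro hxSb
        by_contra hne
        refine hxO.2 ⟨⟨hxSb, ?_⟩, hne⟩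
        exact ⟨x - c, interior_subset hxO.1, by beta_reduce; rw [sub_add_cancel]⟩
      choose! β hβ1 hβcs hβicc hβne using hbump
      set g : G → ℂ := fun x => ∑ q ∈ hQfin.toFinset, φ (p t + q) * (β q x : ℂ) with hg
      have hgc : Continuous g := by
        apply continuous_finset_sum
        intro q _
        exact continuous_const.mul (Complex.continuous_ofReal.comp (β q).continuous)
      have hgsupp : ∀ x, g x ≠ 0 → x + t ∈ tsupport φ + C0 := by
        intro x hx
        obtain ⟨q, hqF, hterm⟩ : ∃ q ∈ hQfin.toFinset, φ (p t + q) * (β q x : ℂ) ≠ 0 := by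
          by_contra hcon
          push_neg at hcon
          exact hx (Finset.sum_eq_zero hcon)
        have hq : q ∈ Q := hQfin.mem_toFinset.mp hqF
        have hβx : β q x ≠ 0 := by
          intro h0
          apply hterm
          rw [h0]
          simp
        have h1 := (hβne q hq x hβx).1
        refine ⟨p t + q, (hQmem q hq).1, x - (p t + q - t), interior_subset h1, ?_⟩
        beta_reduce
        abel
      have hK2 : IsCompact ((fun y => y - t) '' (tsupport φ + C0)) :=
        (hCc.add hC0c).image (continuous_sub_right t)
      have hgcs : HasCompactSupport g := by
        apply HasCompactSupport.intro hK2
        intro x hxK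
        by_contra hx
        apply hxK
        refine ⟨x + t, hgsupp x hx, ?_⟩
        beta_reduce
        rw [add_sub_cancel_right]
      set ψ' : C_c(G, ℂ) := ⟨⟨g, hgc⟩, hgcs⟩ with hψ'
      have hψ'app : ∀ x, ψ' x = g x := fun _ => rfl
      have htr : ∀ x : G, (translateCc t φ) x = φ (x + t) := fun _ => rfl
      have hagree : ∀ x ∈ Sb, (translateCc t φ) x = ψ' x := by
        intro x hxSb
        rw [htr, hψ'app]
        by_cases hxt : x + t ∈ tsupport φ
        · have h1 : x + t ∈ {y | y ∈ tsupport φ ∧ y - t ∈ Sb} :=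
            ⟨hxt, by rwa [add_sub_cancel_right]⟩
          rw [hpt] at h1
          obtain ⟨q0, hq0, heq0⟩ := h1
          beta_reduce at heq0
          have hxc : x = p t + q0 - t := by rw [heq0, add_sub_cancel_right]
          show φ (x + t) = ∑ q ∈ hQfin.toFinset, φ (p t + q) * ((β q) x : ℂ)
          rw [Finset.sum_eq_single_of_mem q0 (hQfin.mem_toFinset.mpr hq0)]
          · rw [show β q0 x = 1 from by rw [hxc]; exact hβ1 q0 hq0]
            rw [heq0]
            simp
          · intro q hqF hqne
            have hq : q ∈ Q := hQfin.mem_toFinset.mp hqF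
            by_contra hterm
            have hβx : β q x ≠ 0 := by
              intro h0
              apply hterm
              rw [h0]
              simp
            have h2 := (hβne q hq x hβx).2 hxSb
            apply hqne
            have h3 : p t + q - t = p t + q0 - t := by rw [← h2, hxc]
            exact add_left_cancel (sub_left_inj.mp h3)
        · rw [image_eq_zero_of_notMem_tsupport hxt]
          show (0 : ℂ) = ∑ q ∈ hQfin.toFinset, φ (p t + q) * ((β q) x : ℂ)
          symm
          apply Finset.sum_eq_zero
          intro q hqF
          have hq : q ∈ Q := hQfin.mem_toFinset.mp hqF
          by_contra hterm
          have hβx : β q x ≠ 0 := by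
            intro h0
            apply hterm
            rw [h0]
            simp
          have h2 := (hβne q hq x hβx).2 hxSb
          apply hxt
          rw [h2]
          have h5 : p t + q - t + t = p t + q := by rw [sub_add_cancel]
          rw [h5]
          exact (hQmem q hq).1
      have hsub0 : Λb (translateCc t φ - ψ') = 0 := by
        apply hsupp
        intro x hxSb
        rw [CompactlySupportedContinuousMap.coe_sub]
        simp only [Pi.sub_apply]
        rw [hagree x hxSb, sub_self]
      have hΛeq : mulDelta Λb t φ = Λb ψ' := by
        have hdecomp : translateCc t φ = ψ' + (translateCc t φ - ψ') := by abel
        show Λb (translateCc t φ) = Λb ψ'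
        rw [hdecomp, aux_lin_add hlin, hsub0, add_zero]
      rw [hΛeq]
      have hψ'supp : tsupport ψ' ⊆ {x | x + t ∈ tsupport φ + C0} := by
        apply closure_minimal
        · intro x hx
          exact hgsupp x hx
        · exact ((hCc.add hC0c).isClosed).preimage (continuous_add_right t)
      have hψ'b : ∀ x, ‖ψ' x‖ ≤ N * ε := by
        intro x
        rw [hψ'app]
        calc ‖∑ q ∈ hQfin.toFinset, φ (p t + q) * (β q x : ℂ)‖
            ≤ ∑ q ∈ hQfin.toFinset, ‖φ (p t + q) * (β q x : ℂ)‖ := norm_sum_le _ _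
          _ ≤ ∑ _q ∈ hQfin.toFinset, ε := by
              apply Finset.sum_le_sum
              intro q hqF
              have hq : q ∈ Q := hQfin.mem_toFinset.mp hqF
              rw [norm_mul]
              have h4 : ‖(β q x : ℂ)‖ ≤ 1 := by
                rw [Complex.norm_real, Real.norm_eq_abs, abs_of_nonneg (hβicc q hq x).1]
                exact (hβicc q hq x).2
              calc ‖φ (p t + q)‖ * ‖(β q x : ℂ)‖ ≤ ε * 1 :=
                    mul_le_mul (hpB q hq) h4 (norm_nonneg _) hε.le
                _ = ε := mul_one ε
          _ = N * ε := by rw [Finset.sum_const, nsmul_eq_mul, hN]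
      exact hbd t ψ' (N * ε) hψ'supp hψ'b
    exact le_of_tendsto (hconv φ).norm hest
  have hle : ∀ η : ℝ, 0 < η → ‖Λ φ‖ ≤ η := by
    intro η hη
    have hA1 : (0:ℝ) < Cst * N + 1 := by positivity
    have h1 := hmain (η / (Cst * N + 1)) (by positivity)
    calc ‖Λ φ‖ ≤ Cst * (N * (η / (Cst * N + 1))) := h1
      _ = (Cst * N) * η / (Cst * N + 1) := by ring
      _ ≤ (Cst * N + 1) * η / (Cst * N + 1) := by
          gcongr <;> linarith
      _ = η := by field_simp
  have hzero : ‖Λ φ‖ ≤ 0 := by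
    by_contra h
    push_neg at h
    have := hle (‖Λ φ‖ / 2) (by linarith)
    linarith
  simpa using le_antisymm hzero (norm_nonneg _)
/-- Let `Λb` be a weighted FLC set supported on an FLC set `Sb`.  Then every
element `Λ` of the hull of `Λb` (the vague closure of its `G`-orbit) is supported on some point
set `S` belonging to the hull of `Sb`. -/
theorem hull_of_weighted_FLC_supported
    (Λb : C_c(G, ℂ) → ℂ) (hTB : IsTranslationBounded Λb)
    (Sb : Set G) (hFLC : IsFLC Sb) (hsupp : IsSupportedOn Λb Sb) :
    ∀ Λ ∈ hullF Λb, ∃ S ∈ pointHull Sb, IsSupportedOn Λ S := by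
  classical
  intro Λ hΛ
  obtain ⟨hlin, Kb, M, hKb, hKbint, htb⟩ := hTB
  rcases Set.eq_empty_or_nonempty Sb with hSbe | ⟨b0, hb0⟩
  · subst hSbe
    have hΛb0 : ∀ φ : C_c(G, ℂ), Λb φ = 0 := fun φ => hsupp φ (by simp)
    have horb : {Λ' : C_c(G, ℂ) → ℂ | ∃ t : G, Λ' = mulDelta Λb t} = {Λb} := by
      ext Λ'
      simp only [Set.mem_setOf_eq, Set.mem_singleton_iff]
      constructor
      · rintro ⟨t, rfl⟩
        funext ψ
        show Λb (translateCc t ψ) = Λb ψ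
        rw [hΛb0, hΛb0]
      · intro h
        refine ⟨0, ?_⟩
        rw [h]
        funext ψ
        show Λb ψ = Λb (translateCc 0 ψ)
        rw [hΛb0, hΛb0]
    rw [hullF, horb, closure_singleton, Set.mem_singleton_iff] at hΛ
    refine ⟨∅, ?_, ?_⟩
    · intro U hU K hK
      exact ⟨0, 0, mem_of_mem_nhds hU, by simp [setTranslate]⟩
    · intro φ _
      rw [hΛ]
      exact hΛb0 φ
  · obtain ⟨hUd, hcl, hiso⟩ := hFLC
    have h0D : (0 : G) ∈ Sb - Sb := ⟨b0, hb0, b0, hb0, sub_self b0⟩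
    haveI hT2 : T2Space G := by
      apply IsTopologicalAddGroup.t2Space_iff_zero_closed.mpr
      rw [← closure_subset_iff_isClosed]
      intro y hy
      obtain ⟨U, hU, hUsub⟩ := hUd
      obtain ⟨V, hVU, hVo, hV0⟩ := mem_nhds_iff.mp hU
      have hyD : y ∈ Sb - Sb := by
        have h1 : closure ({0} : Set G) ⊆ closure (Sb - Sb) :=
          closure_mono (by simpa using h0D)
        have h2 := h1 hy
        rwa [hcl.closure_eq] at h2
      have hnyV : -y ∈ V := by
        have hOo : IsOpen ((fun z => z + y) '' V) :=
          (Homeomorph.addRight y).isOpen_image.mpr hVo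
        have hyO : y ∈ (fun z => z + y) '' V := ⟨0, hV0, zero_add y⟩
        obtain ⟨z, hzO, hz0⟩ := mem_closure_iff.mp hy _ hOo hyO
        obtain ⟨v, hvV, hveq⟩ := hzO
        rw [Set.mem_singleton_iff] at hz0
        rw [hz0] at hveq
        have hv : v = -y := by
          have h3 : v + y = 0 := hveq
          have := congrArg (fun z => z - y) h3
          simpa using this
        rwa [← hv]
      have hnyD : -y ∈ Sb - Sb := by
        obtain ⟨a, ha, b, hb, hab⟩ := hyD
        exact ⟨b, hb, a, ha, by rw [← hab]; beta_reduce; abel⟩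
      have := hUsub ⟨hVU hnyV, hnyD⟩
      rw [Set.mem_singleton_iff] at this
      have hy0 : y = 0 := by
        have := neg_eq_zero.mp this
        exact this
      rw [hy0]
      exact rfl
    obtain ⟨k0, hk0⟩ := hKbint
    haveI hLC : LocallyCompactSpace G :=
      hKb.locallyCompactSpace_of_mem_nhds_of_addGroup (mem_interior_iff_mem_nhds.mp hk0)
    obtain ⟨C0, hC0c, hC0n⟩ := exists_compact_mem_nhds (0 : G)
    have hFne : Filter.NeBot (Filter.comap (fun t : G => mulDelta Λb t) (𝓝 Λ)) := by
      apply Filter.comap_neBot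
      intro s hs
      obtain ⟨Λ', hΛ's, t, hΛ'eq⟩ := mem_closure_iff_nhds.mp hΛ s hs
      exact ⟨t, by rwa [← hΛ'eq]⟩
    set 𝒱 := Ultrafilter.of (Filter.comap (fun t : G => mulDelta Λb t) (𝓝 Λ)) with h𝒱
    have h𝒱le := Ultrafilter.of_le (Filter.comap (fun t : G => mulDelta Λb t) (𝓝 Λ))
    have hconv0 : Filter.Tendsto (fun t : G => mulDelta Λb t) (𝒱 : Filter G) (𝓝 Λ) := by
      calc Filter.map (fun t : G => mulDelta Λb t) (𝒱 : Filter G)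
          ≤ Filter.map (fun t : G => mulDelta Λb t)
            (Filter.comap (fun t : G => mulDelta Λb t) (𝓝 Λ)) := Filter.map_mono h𝒱le
        _ ≤ 𝓝 Λ := Filter.map_comap_le
    have hconv : ∀ φ : C_c(G, ℂ),
        Filter.Tendsto (fun t => mulDelta Λb t φ) (𝒱 : Filter G) (𝓝 (Λ φ)) := fun φ =>
      ((continuous_apply φ).tendsto Λ).comp hconv0
    exact ⟨limitSet Sb 𝒱, aux_limitSet_mem_pointHull hcl hiso 𝒱 hC0c hC0n,
      aux_supported hcl hiso hlin hsupp hKb ⟨k0, hk0⟩ htb 𝒱 hC0c hC0n hconv⟩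
end
end

section
/- Let X be a compact 𝔾-stable subset of M_{(K,M)}(𝔾). Every bounded complex Radon measure μ ∈ M^b(X) defines a translation-bounded measure i(μ) ∈ M^∞(𝔾), its intensity, by ∫_𝔾 φ d i(μ) = ∫_X (∫_𝔾 φ dΛ) dμ(Λ) for all φ ∈ C_c(𝔾); if μ is a probability measure then i(μ) ∈ M_{(K,M)}(𝔾). Moreover the intensity map μ ↦ i(μ), from M^b(X) with the vague topology to M^∞(𝔾) with the vague topology, is continuous and 𝔾-commuting: i(μ(· * δ_{−t})) = i(μ) * δ_t for every t ∈ 𝔾. -/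
open MeasureTheory Filter Topology Set Pointwise CompactlySupported

noncomputable section

variable {G : Type*} [AddCommGroup G] [TopologicalSpace G] [IsTopologicalAddGroup G]

variable [MeasurableSpace G]

variable (X : Set (C_c(G, ℂ) → ℂ))

/-- Evaluation of measures in `X` at a fixed test function, as a continuous function on `X`. -/
def evalCM (φ : C_c(G, ℂ)) : C(↥X, ℂ) :=
  ⟨fun Λ => (Λ : C_c(G, ℂ) → ℂ) φ, (continuous_apply φ).comp continuous_subtype_val⟩

/-- The intensity of a bounded complex Radon measure `μ ∈ M^b(X)` (realized via Riesz duality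
as an element of the weak-* dual of `C(X, ℂ)`): `∫ φ d(i μ) = ∫_X (∫ φ dΛ) dμ(Λ)`. -/
def intensity (μ : WeakDual ℂ C(↥X, ℂ)) : C_c(G, ℂ) → ℂ := fun φ => μ (evalCM X φ)

/-- The action `Λ ↦ Λ * δ_t` on `X`, as a continuous self map of `X`. -/
def actCM (hst : ∀ Λ ∈ X, ∀ t : G, mulDelta Λ t ∈ X) (t : G) : C(↥X, ↥X) :=
  ⟨fun Λ => ⟨mulDelta (Λ : C_c(G, ℂ) → ℂ) t, hst Λ.1 Λ.2 t⟩,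
    Continuous.subtype_mk
      ((continuous_pi fun φ => continuous_apply (translateCc t φ)).comp
        continuous_subtype_val) _⟩

/-- Pre-composition with a continuous self map of `X`, as a continuous linear operator on
`C(X, ℂ)` with the compact-open topology. -/
def precompL (α : C(↥X, ↥X)) : C(↥X, ℂ) →L[ℂ] C(↥X, ℂ) :=
  { toFun := fun f => f.comp α
    map_add' := fun f g => by ext x; rfl
    map_smul' := fun c f => by ext x; rfl
    cont := ContinuousMap.continuous_precomp α }

/-- The natural `G`-action `μ.t = μ(· * δ_{-t})` on `M^b(X)`, realized on the weak-* dual. -/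
def actWD (hst : ∀ Λ ∈ X, ∀ t : G, mulDelta Λ t ∈ X) (t : G)
    (μ : WeakDual ℂ C(↥X, ℂ)) : WeakDual ℂ C(↥X, ℂ) :=
  ContinuousLinearMap.comp (μ : C(↥X, ℂ) →L[ℂ] ℂ) (precompL X (actCM X hst t))

/-- Positivity of a functional on `C(X, ℂ)`. -/
def IsPositiveWD (μ : WeakDual ℂ C(↥X, ℂ)) : Prop :=
  ∀ f : C(↥X, ℂ), (∀ x, (f x).im = 0 ∧ 0 ≤ (f x).re) → (μ f).im = 0 ∧ 0 ≤ (μ f).re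

/-- The (complexified) real part of a complex-valued continuous map. -/
def reCM {Y : Type*} [TopologicalSpace Y] (f : C(Y, ℂ)) : C(Y, ℂ) :=
  ⟨fun x => ((f x).re : ℂ),
    Complex.continuous_ofReal.comp (Complex.continuous_re.comp f.continuous)⟩

/-- The (complexified) imaginary part of a complex-valued continuous map. -/
def imCM {Y : Type*} [TopologicalSpace Y] (f : C(Y, ℂ)) : C(Y, ℂ) :=
  ⟨fun x => ((f x).im : ℂ),
    Complex.continuous_ofReal.comp (Complex.continuous_im.comp f.continuous)⟩

/-- The positive part of (the real part of) a complex-valued continuous map. -/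
def posCM {Y : Type*} [TopologicalSpace Y] (f : C(Y, ℂ)) : C(Y, ℂ) :=
  ⟨fun x => ((max (f x).re 0 : ℝ) : ℂ),
    Complex.continuous_ofReal.comp
      ((Complex.continuous_re.comp f.continuous).max continuous_const)⟩

lemma posCM_nonneg {Y : Type*} [TopologicalSpace Y] (f : C(Y, ℂ)) (x : Y) :
    ((posCM f) x).im = 0 ∧ 0 ≤ ((posCM f) x).re := by
  simp [posCM, le_max_right]

lemma posCM_decomp {Y : Type*} [TopologicalSpace Y] (f : C(Y, ℂ))
    (hf : ∀ x, (f x).im = 0) : f = posCM f - posCM (-f) := by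
  ext x
  have h := hf x
  apply Complex.ext
  · simp only [posCM, ContinuousMap.sub_apply, ContinuousMap.coe_mk, ContinuousMap.neg_apply,
      Complex.sub_re, Complex.ofReal_re, Complex.neg_re]
    rcases le_total ((f x).re) 0 with h' | h'
    · rw [max_eq_right h', max_eq_left (by linarith)]; ring
    · rw [max_eq_left h', max_eq_right (by linarith)]; ring
  · simp [posCM, h]

lemma im_eq_zero_of_pos {X : Set (C_c(G, ℂ) → ℂ)} {μ : WeakDual ℂ C(↥X, ℂ)}
    (hpos : IsPositiveWD X μ) (f : C(↥X, ℂ)) (hf : ∀ x, (f x).im = 0) :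
    (μ f).im = 0 := by
  rw [posCM_decomp f hf, map_sub, Complex.sub_im,
    (hpos _ (posCM_nonneg f)).1, (hpos _ (posCM_nonneg (-f))).1, sub_zero]

lemma re_le_of_pos {X : Set (C_c(G, ℂ) → ℂ)} {μ : WeakDual ℂ C(↥X, ℂ)}
    (hpos : IsPositiveWD X μ) (h1 : μ (1 : C(↥X, ℂ)) = 1) (f : C(↥X, ℂ)) (M : ℝ)
    (hf : ∀ x, (f x).im = 0 ∧ (f x).re ≤ M) : (μ f).re ≤ M := by
  have h := hpos ((M : ℂ) • (1 : C(↥X, ℂ)) - f) (fun x => by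
    constructor
    · simp [(hf x).1]
    · simp only [ContinuousMap.sub_apply, ContinuousMap.smul_apply, ContinuousMap.one_apply,
        smul_eq_mul, mul_one, Complex.sub_re, Complex.ofReal_re, sub_nonneg]
      exact (hf x).2)
  have h2 : μ ((M : ℂ) • (1 : C(↥X, ℂ)) - f) = (M : ℂ) - μ f := by
    rw [map_sub, _root_.map_smul, h1, smul_eq_mul, mul_one]
  rw [h2] at h
  have := h.2
  simp only [Complex.sub_re, Complex.ofReal_re, sub_nonneg] at this
  exact this

lemma norm_apply_le_of_pos {X : Set (C_c(G, ℂ) → ℂ)} {μ : WeakDual ℂ C(↥X, ℂ)}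
    (hpos : IsPositiveWD X μ) (h1 : μ (1 : C(↥X, ℂ)) = 1) (f : C(↥X, ℂ)) (M : ℝ)
    (hf : ∀ x, ‖f x‖ ≤ M) : ‖μ f‖ ≤ M := by
  have hne : Nonempty ↥X := by
    by_contra hne
    rw [not_nonempty_iff] at hne
    have : (1 : C(↥X, ℂ)) = 0 := ContinuousMap.ext fun x => (hne.false x).elim
    rw [this, map_zero] at h1
    exact zero_ne_one h1
  obtain ⟨x₀⟩ := hne
  have hM : 0 ≤ M := le_trans (norm_nonneg _) (hf x₀)
  rcases eq_or_ne (μ f) 0 with hz | hz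
  · simpa [hz] using hM
  · set z := μ f with hzdef
    set c : ℂ := (‖z‖ : ℂ) / z with hc
    have hcz : c * z = (‖z‖ : ℂ) := div_mul_cancel₀ _ hz
    have hcnorm : ‖c‖ = 1 := by
      rw [hc, norm_div, Complex.norm_real, norm_norm, div_self (norm_ne_zero_iff.mpr hz)]
    -- decompose c • f into real and imaginary parts
    have hdecomp : c • f = reCM (c • f) + Complex.I • imCM (c • f) := by
      ext x
      simp only [ContinuousMap.add_apply, ContinuousMap.smul_apply, reCM, imCM,
        ContinuousMap.coe_mk, smul_eq_mul]
      rw [mul_comm Complex.I]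
      exact (Complex.re_add_im _).symm
    have him : (μ (imCM (c • f))).im = 0 :=
      im_eq_zero_of_pos hpos _ (fun x => by simp [imCM])
    have hz' : μ (c • f) = (‖z‖ : ℂ) := by
      rw [_root_.map_smul, smul_eq_mul, ← hzdef, hcz]
    have hre : ‖z‖ = (μ (reCM (c • f))).re := by
      have : μ (c • f) = μ (reCM (c • f)) + Complex.I * μ (imCM (c • f)) := by
        conv_lhs => rw [hdecomp]
        rw [map_add, _root_.map_smul, smul_eq_mul]
      rw [hz'] at this
      have := congrArg Complex.re this
      simpa [Complex.mul_im, Complex.mul_re, him] using this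
    rw [hzdef] at hre ⊢
    rw [show ‖μ f‖ = (μ (reCM (c • f))).re from hre]
    apply re_le_of_pos hpos h1
    intro x
    refine ⟨by simp [reCM], ?_⟩
    simp only [reCM, ContinuousMap.coe_mk, ContinuousMap.smul_apply, Complex.ofReal_re,
      smul_eq_mul]
    calc (c * f x).re ≤ ‖c * f x‖ := Complex.re_le_norm _
      _ = ‖c‖ * ‖f x‖ := norm_mul _ _
      _ ≤ M := by rw [hcnorm, one_mul]; exact hf x

/-- Theorem `theo:intensity` and Proposition `prop:barycenter`. Let `X` be a
compact `G`-stable subset of `M_{(K, M)}(G)`.  Every bounded complex Radon measure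
`μ ∈ M^b(X)` defines a translation-bounded measure `i(μ) ∈ M^∞(G)`, its intensity, via
`∫ φ d(i μ) = ∫_X (∫ φ dΛ) dμ(Λ)`; if `μ` is a probability measure then
`i(μ) ∈ M_{(K, M)}(G)`.  Moreover the intensity map is vaguely continuous and `G`-commuting:
`i(μ(· * δ_{-t})) = i(μ) * δ_t`. -/
theorem intensity_map_properties
    (K : Set G) (M : ℝ) (hK : IsCompact K) (hKint : (interior K).Nonempty)
    (hXc : IsCompact X)
    (hX : ∀ Λ ∈ X, IsLinearFunc Λ ∧ IsTransBddWith Λ K M)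
    (hst : ∀ Λ ∈ X, ∀ t : G, mulDelta Λ t ∈ X) :
    (∀ μ : WeakDual ℂ C(↥X, ℂ), IsLinearFunc (intensity X μ) ∧
      ∃ (K' : Set G) (M' : ℝ), IsCompact K' ∧ (interior K').Nonempty ∧
        IsTransBddWith (intensity X μ) K' M') ∧
    (∀ μ : WeakDual ℂ C(↥X, ℂ), IsPositiveWD X μ → μ (1 : C(↥X, ℂ)) = 1 →
      IsTransBddWith (intensity X μ) K M) ∧
    Continuous (intensity X) ∧
    (∀ (μ : WeakDual ℂ C(↥X, ℂ)) (t : G),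
      intensity X (actWD X hst t μ) = mulDelta (intensity X μ) t) := by
  haveI : CompactSpace ↥X := isCompact_iff_compactSpace.mp hXc
  have heval : ∀ (c : ℂ) (φ ψ : C_c(G, ℂ)),
      evalCM X (c • φ + ψ) = c • evalCM X φ + evalCM X ψ := by
    intro c φ ψ
    ext ⟨Λ, hΛ⟩
    simpa [evalCM, smul_eq_mul] using (hX Λ hΛ).1 c φ ψ
  refine ⟨?_, ?_, ?_, ?_⟩
  · -- intensity is a translation-bounded measure
    intro μ
    refine ⟨fun c φ ψ => by
      simp only [intensity, heval c φ ψ, map_add, _root_.map_smul, smul_eq_mul], K,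
      ‖(show C(↥X, ℂ) →L[ℂ] ℂ from μ)‖ * max M 0, hK, hKint, ?_⟩
    intro t φ hsupp hφ
    have hle : ‖evalCM X φ‖ ≤ max M 0 := by
      rw [ContinuousMap.norm_le _ (le_max_right M 0)]
      rintro ⟨Λ, hΛ⟩
      exact le_trans ((hX Λ hΛ).2 t φ hsupp hφ) (le_max_left M 0)
    calc ‖intensity X μ φ‖ = ‖(show C(↥X, ℂ) →L[ℂ] ℂ from μ) (evalCM X φ)‖ := rfl
      _ ≤ ‖(show C(↥X, ℂ) →L[ℂ] ℂ from μ)‖ * ‖evalCM X φ‖ := ContinuousLinearMap.le_opNorm _ _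
      _ ≤ ‖(show C(↥X, ℂ) →L[ℂ] ℂ from μ)‖ * max M 0 :=
          mul_le_mul_of_nonneg_left hle (norm_nonneg _)
  · -- probability measures give (K, M)-translation-bounded intensities
    intro μ hpos h1 t φ hsupp hφ
    exact norm_apply_le_of_pos hpos h1 (evalCM X φ) M
      (fun ⟨Λ, hΛ⟩ => (hX Λ hΛ).2 t φ hsupp hφ)
  · -- continuity
    exact continuous_pi fun φ => WeakDual.eval_continuous (evalCM X φ)
  · -- equivariance
    intro μ t
    funext φ
    show μ ((evalCM X φ).comp (actCM X hst t)) = μ (evalCM X (translateCc t φ))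
    have h : (evalCM X φ).comp (actCM X hst t) = evalCM X (translateCc t φ) := by
      ext ⟨Λ, hΛ⟩; rfl
    rw [h]

end
end
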